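/- Let U ⊆ ℂ be an open set, let Ξ₀ : U → ℂ be holomorphic, and let u : U → ℝ be a C² function satisfying Δu = 16|Ξ₀|² e^{2u} on U. Then on the open set U ∖ Ξ₀⁻¹(0), the function v := u + log|Ξ₀| + 2 log 2 satisfies Δv = e^{2v}. -/

import Mathlib

/-- The Euclidean Laplacian `∂²f/∂x² + ∂²f/∂y²` of a function `f : ℂ → ℝ`,
where `ℂ` is identified with `ℝ²` via `z = x + iy`. -/
noncomputable def lap (f : ℂ → ℝ) (z : ℂ) : ℝ :=
  fderiv ℝ (fun w => fderiv ℝ f w 1) z 1 +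
    fderiv ℝ (fun w => fderiv ℝ f w Complex.I) z Complex.I

open Complex Filter

lemma fderiv_apply_eq {f : ℂ → ℂ} {w : ℂ} (hf : DifferentiableAt ℂ f w) (a : ℂ) :
    fderiv ℂ f w a = a * deriv f w := by
  have : a = a • (1 : ℂ) := by simp
  rw [this, map_smul, smul_eq_mul, ← deriv, ← this]

lemma fderiv_comp_re {f : ℂ → ℂ} {w : ℂ} (hf : DifferentiableAt ℂ f w) (a : ℂ) :
    fderiv ℝ (fun x => (f x).re) w a = (a * deriv f w).re := by
  have h2 : HasFDerivAt (fun x => (f x).re)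
      (Complex.reCLM.comp ((fderiv ℂ f w).restrictScalars ℝ)) w :=
    Complex.reCLM.hasFDerivAt.comp w (hf.hasFDerivAt.restrictScalars ℝ)
  rw [h2.fderiv]
  simp [fderiv_apply_eq hf a]

lemma fderiv_comp_im {f : ℂ → ℂ} {w : ℂ} (hf : DifferentiableAt ℂ f w) (a : ℂ) :
    fderiv ℝ (fun x => (f x).im) w a = (a * deriv f w).im := by
  have h2 : HasFDerivAt (fun x => (f x).im)
      (Complex.imCLM.comp ((fderiv ℂ f w).restrictScalars ℝ)) w :=
    Complex.imCLM.hasFDerivAt.comp w (hf.hasFDerivAt.restrictScalars ℝ)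
  rw [h2.fderiv]
  simp [fderiv_apply_eq hf a]

lemma lap_re_holo {f : ℂ → ℂ} {V : Set ℂ} (hV : IsOpen V) (hf : DifferentiableOn ℂ f V)
    {z : ℂ} (hz : z ∈ V) : lap (fun w => (f w).re) z = 0 := by
  have hfa : ∀ w ∈ V, DifferentiableAt ℂ f w := fun w hw => hf.differentiableAt (hV.mem_nhds hw)
  have hd2 : DifferentiableAt ℂ (deriv f) z :=
    (((hf.analyticOnNhd hV).deriv) z hz).differentiableAt
  have e1 : (fun w => fderiv ℝ (fun x => (f x).re) w 1) =ᶠ[nhds z] fun w => (deriv f w).re := by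
    filter_upwards [hV.mem_nhds hz] with w hw
    rw [fderiv_comp_re (hfa w hw), one_mul]
  have e2 : (fun w => fderiv ℝ (fun x => (f x).re) w I) =ᶠ[nhds z]
      fun w => -((deriv f w).im) := by
    filter_upwards [hV.mem_nhds hz] with w hw
    rw [fderiv_comp_re (hfa w hw)]
    simp [Complex.mul_re]
  unfold lap
  rw [e1.fderiv_eq, e2.fderiv_eq, fderiv_comp_re hd2]
  have : fderiv ℝ (fun w => -((deriv f w).im)) z = -(fderiv ℝ (fun w => (deriv f w).im) z) :=
    fderiv_neg
  rw [this]
  simp [fderiv_comp_im hd2, Complex.mul_re, Complex.mul_im]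

lemma lap_add {f g : ℂ → ℝ} {z : ℂ} (hf : ContDiffAt ℝ 2 f z) (hg : ContDiffAt ℝ 2 g z) :
    lap (fun w => f w + g w) z = lap f z + lap g z := by
  have hfe : ∀ᶠ w in nhds z, DifferentiableAt ℝ f w :=
    (hf.eventually (by norm_num)).mono fun w hw => hw.differentiableAt two_ne_zero
  have hge : ∀ᶠ w in nhds z, DifferentiableAt ℝ g w :=
    (hg.eventually (by norm_num)).mono fun w hw => hw.differentiableAt two_ne_zero
  have hf1 : ∀ a : ℂ, DifferentiableAt ℝ (fun w => fderiv ℝ f w a) z := by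
    intro a
    exact ((hf.fderiv_right (m := 1) (by norm_num)).differentiableAt one_ne_zero).clm_apply
      (differentiableAt_const a)
  have hg1 : ∀ a : ℂ, DifferentiableAt ℝ (fun w => fderiv ℝ g w a) z := by
    intro a
    exact ((hg.fderiv_right (m := 1) (by norm_num)).differentiableAt one_ne_zero).clm_apply
      (differentiableAt_const a)
  have key : ∀ a : ℂ, fderiv ℝ (fun w => fderiv ℝ (fun x => f x + g x) w a) z a =
      fderiv ℝ (fun w => fderiv ℝ f w a) z a + fderiv ℝ (fun w => fderiv ℝ g w a) z a := by
    intro a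
    have ev : (fun w => fderiv ℝ (fun x => f x + g x) w a)
        =ᶠ[nhds z] fun w => fderiv ℝ f w a + fderiv ℝ g w a := by
      filter_upwards [hfe, hge] with w h1 h2
      rw [fderiv_fun_add h1 h2]; rfl
    rw [ev.fderiv_eq, fderiv_fun_add (hf1 a) (hg1 a)]; rfl
  unfold lap
  rw [key 1, key I]; ring


/-- Part (i) of the key local lemma: if `Ξ₀` is holomorphic on an open set `U` and the
`C²` function `u` satisfies `Δu = 16|Ξ₀|²e^{2u}` on `U`, then on `U \ Ξ₀⁻¹(0)` the function
`v = u + log|Ξ₀| + 2 log 2` satisfies `Δv = e^{2v}`. -/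
theorem stmt1 (U : Set ℂ) (hU : IsOpen U) (Ξ₀ : ℂ → ℂ)
    (hΞ : DifferentiableOn ℂ Ξ₀ U)
    (u : ℂ → ℝ) (hu : ContDiffOn ℝ 2 u U)
    (heq : ∀ z ∈ U, lap u z = 16 * ‖Ξ₀ z‖ ^ 2 * Real.exp (2 * u z)) :
    ∀ z ∈ U \ Ξ₀ ⁻¹' {0},
      lap (fun w => u w + Real.log ‖Ξ₀ w‖ + 2 * Real.log 2) z =
        Real.exp (2 * (u z + Real.log ‖Ξ₀ z‖ + 2 * Real.log 2)) := by
  rintro z ⟨hzU, hz0⟩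
  have hΞz : Ξ₀ z ≠ 0 := fun h => hz0 (by simp [Set.mem_preimage, h])
  have habs : 0 < ‖Ξ₀ z‖ := norm_pos_iff.mpr hΞz
  set c : ℂ := (‖Ξ₀ z‖ : ℂ) / Ξ₀ z with hc
  have hcabs : ‖c‖ = 1 := by
    rw [hc, norm_div, Complex.norm_real, norm_norm, div_self habs.ne']
  have hcz : c * Ξ₀ z = (‖Ξ₀ z‖ : ℂ) := by
    rw [hc, div_mul_cancel₀ _ hΞz]
  set V : Set ℂ := U ∩ (fun w => c * Ξ₀ w) ⁻¹' Complex.slitPlane with hV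
  have hVopen : IsOpen V :=
    ContinuousOn.isOpen_inter_preimage ((hΞ.continuousOn).const_smul c) hU
      Complex.isOpen_slitPlane
  have hzV : z ∈ V := by
    refine ⟨hzU, ?_⟩
    show c * Ξ₀ z ∈ Complex.slitPlane
    rw [hcz]
    exact Complex.mem_slitPlane_iff.2 (Or.inl (by simpa using habs))
  set g : ℂ → ℂ := fun w => Complex.log (c * Ξ₀ w) + ((2 * Real.log 2 : ℝ) : ℂ) with hgdef
  have hg : DifferentiableOn ℂ g V := by
    intro w hw
    exact ((((hΞ.mono Set.inter_subset_left) w hw).const_mul c).clog hw.2).add_const _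
  have hre : (fun w => u w + Real.log ‖Ξ₀ w‖ + 2 * Real.log 2)
      = fun w => u w + (g w).re := by
    funext w
    simp only [hgdef, Complex.add_re, Complex.log_re, Complex.ofReal_re, norm_mul, hcabs, one_mul]
    ring
  have hu2 : ContDiffAt ℝ 2 u z := hu.contDiffAt (hU.mem_nhds hzU)
  have hg2 : ContDiffAt ℝ 2 (fun w => (g w).re) z := by
    have : ContDiffAt ℂ 2 g z := ((hg.analyticOnNhd hVopen) z hzV).contDiffAt
    exact Complex.reCLM.contDiff.contDiffAt.comp z (this.restrict_scalars ℝ)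
  rw [hre, lap_add hu2 hg2, lap_re_holo hVopen hg hzV, add_zero, heq z hzU]
  have harg : 2 * (u z + Real.log ‖Ξ₀ z‖ + 2 * Real.log 2)
      = (2 * u z + Real.log (‖Ξ₀ z‖ ^ 2)) + Real.log 16 := by
    rw [Real.log_pow, show (16 : ℝ) = 2 ^ 4 by norm_num, Real.log_pow]
    push_cast; ring
  rw [harg, Real.exp_add, Real.exp_add, Real.exp_log (pow_pos habs 2),
    Real.exp_log (by norm_num : (0:ℝ) < 16)]
  ring
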